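/- For all integers m ≥ 2 and q ≥ 2, the array P of Construction 1 is an (mq, q^{m−1}, q^{m−2}, (q−1)q^{m−1}) placement delivery array. Moreover, every row of P contains exactly m stars, and for every row f and every δ ∈ {1,…,m}, among the q entries of row f in the columns (δ,1), (δ,2), …, (δ,q) there is exactly one star. -/

import Mathlib

/-- `natMod1 b a` is the representative of `b` modulo `a` lying in `{1, …, a}`
(i.e. `Mod(b,a)` in the paper's notation). -/
def natMod1 (b a : ℕ) : ℕ := if b % a = 0 then a else b % a

lemma natMod1_mem (b q : ℕ) (hq : 1 ≤ q) : natMod1 b q ∈ Finset.Icc 1 q := by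
  unfold natMod1
  split
  · simp [hq]
  · have := Nat.mod_lt b (show 0 < q by omega)
    simp only [Finset.mem_Icc]
    omega

lemma natMod1_mod (b q : ℕ) : natMod1 b q % q = b % q := by
  unfold natMod1
  split
  · simp_all [Nat.mod_self]
  · exact Nat.mod_mod_of_dvd b dvd_rfl

lemma icc_inj {c c' q : ℕ} (hc : c ∈ Finset.Icc 1 q) (hc' : c' ∈ Finset.Icc 1 q)
    (h : c % q = c' % q) : c = c' := by
  simp only [Finset.mem_Icc] at hc hc'
  rcases eq_or_lt_of_le hc.2 with h1 | h1 <;> rcases eq_or_lt_of_le hc'.2 with h2 | h2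
  · omega
  · rw [h1, Nat.mod_self, Nat.mod_eq_of_lt h2] at h; omega
  · rw [h2, Nat.mod_self, Nat.mod_eq_of_lt h1] at h; omega
  · rwa [Nat.mod_eq_of_lt h1, Nat.mod_eq_of_lt h2] at h

lemma natMod1_congr {x y q : ℕ} (h : x % q = y % q) : natMod1 x q = natMod1 y q := by
  unfold natMod1; rw [h]

lemma natMod1_eq_self {c q : ℕ} (hc : c ∈ Finset.Icc 1 q) : natMod1 c q = c := by
  have h1 : 1 ≤ q := by simp only [Finset.mem_Icc] at hc; omega
  exact icc_inj (natMod1_mem c q h1) hc (natMod1_mod c q)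

lemma pin_card {m q : ℕ} (j : Fin m) (G : (Fin m → ℕ) → ℕ)
    (Q : (Fin m → ℕ) → Prop) [DecidablePred Q] (hq : 1 ≤ q)
    (hG : ∀ f c, G (Function.update f j c) = G f)
    (hQ : ∀ f c, Q (Function.update f j c) ↔ Q f)
    (hGmem : ∀ f, G f ∈ Finset.Icc 1 q) :
    ((Fintype.piFinset fun _ : Fin m => Finset.Icc 1 q).filter
      (fun f => f j = G f ∧ Q f)).card
    = ((Fintype.piFinset fun _ : Fin m => Finset.Icc 1 q).filter
      (fun f => f j = 1 ∧ Q f)).card := by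
  apply Finset.card_nbij' (fun f => Function.update f j 1)
    (fun g => Function.update g j (G g))
  · intro f hf
    simp only [Finset.mem_coe, Finset.mem_filter, Fintype.mem_piFinset] at hf ⊢
    obtain ⟨h1, h2, h3⟩ := hf
    refine ⟨fun i => ?_, by simp, (hQ f 1).mpr h3⟩
    rcases eq_or_ne i j with rfl | hij
    · simp only [Function.update_self, Finset.mem_Icc]; omega
    · simpa [Function.update_of_ne hij] using h1 i
  · intro g hg
    simp only [Finset.mem_coe, Finset.mem_filter, Fintype.mem_piFinset] at hg ⊢
    obtain ⟨h1, h2, h3⟩ := hg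
    refine ⟨fun i => ?_, ?_, (hQ g (G g)).mpr h3⟩
    · rcases eq_or_ne i j with rfl | hij
      · simpa using hGmem g
      · simpa [Function.update_of_ne hij] using h1 i
    · simp [hG]
  · intro f hf
    simp only [Finset.mem_coe, Finset.mem_filter] at hf
    beta_reduce
    rw [hG]
    funext i
    rcases eq_or_ne i j with rfl | hij
    · simp [hf.2.1]
    · simp [Function.update_of_ne hij]
  · intro g hg
    simp only [Finset.mem_coe, Finset.mem_filter] at hg
    funext i
    rcases eq_or_ne i j with rfl | hij
    · simp [hg.2.1]
    · simp [Function.update_of_ne hij]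

lemma pins_card {m q : ℕ} (hq : 1 ≤ q) (s : Finset (Fin m)) :
    ((Fintype.piFinset fun _ : Fin m => Finset.Icc 1 q).filter
      (fun f => ∀ i ∈ s, f i = 1)).card = q ^ (m - s.card) := by
  have he : (Fintype.piFinset fun _ : Fin m => Finset.Icc 1 q).filter
      (fun f => ∀ i ∈ s, f i = 1)
      = Fintype.piFinset (fun i => if i ∈ s then ({1} : Finset ℕ) else Finset.Icc 1 q) := by
    ext f
    simp only [Finset.mem_filter, Fintype.mem_piFinset]
    constructor
    · rintro ⟨h1, h2⟩ i
      split
      · next h => simp [h2 i h]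
      · exact h1 i
    · intro h
      constructor
      · intro i
        have := h i
        split at this
        · simp only [Finset.mem_singleton] at this
          simp [Finset.mem_Icc, this, hq]
        · exact this
      · intro i hi
        have := h i
        simp only [if_pos hi, Finset.mem_singleton] at this
        exact this
  rw [he, Fintype.card_piFinset]
  have hc : ∀ i : Fin m, ((if i ∈ s then ({1} : Finset ℕ) else Finset.Icc 1 q)).card
      = if i ∈ s then 1 else q := by
    intro i; split <;> simp [Nat.card_Icc]
  simp only [hc]
  rw [Finset.prod_ite]
  simp only [Finset.prod_const_one, Finset.prod_const, one_mul]
  congr 1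
  rw [Finset.filter_not, Finset.filter_univ_mem, Finset.card_sdiff_of_subset (Finset.subset_univ s),
    Finset.card_univ, Fintype.card_fin]

lemma pow_sub_aux (q m : ℕ) (hm : 1 ≤ m) :
    q ^ m - q ^ (m - 1) = (q - 1) * q ^ (m - 1) := by
  have h : q ^ m = q * q ^ (m - 1) := by
    calc q ^ m = q ^ (m - 1 + 1) := by congr 1; omega
      _ = q ^ (m - 1) * q := pow_succ q (m - 1)
      _ = q * q ^ (m - 1) := mul_comm _ _
  rw [h, Nat.sub_one_mul]

lemma key_mod {q b c s : ℕ} (hq : 1 ≤ q) (hb : b ∈ Finset.Icc 1 q)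
    (hc : c ∈ Finset.Icc 1 q) :
    natMod1 (s + c) q = b ↔ c = natMod1 (b + (q - s % q)) q := by
  have hs : s % q < q := Nat.mod_lt s (show 0 < q by omega)
  have harith : b + (q - s % q) + s % q = b + q := by omega
  have hmq : s % q ≡ s [MOD q] := Nat.mod_modEq s q
  have hbq : b + q ≡ b [MOD q] := Nat.add_mod_right b q
  constructor
  · intro h
    have h1 : (s + c) % q = b % q := by rw [← natMod1_mod (s + c) q, h]
    apply icc_inj hc (natMod1_mem _ _ hq)
    rw [natMod1_mod]
    refine Nat.ModEq.add_right_cancel' (s % q) ?_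
    calc c + s % q ≡ c + s [MOD q] := Nat.ModEq.add_left c hmq
      _ = s + c := Nat.add_comm c s
      _ ≡ b [MOD q] := h1
      _ ≡ b + q [MOD q] := hbq.symm
      _ = b + (q - s % q) + s % q := harith.symm
  · intro h
    have hcmod : c ≡ b + (q - s % q) [MOD q] := by
      show c % q = _ % q
      rw [h, natMod1_mod]
    have h2 : s + c ≡ b [MOD q] := by
      calc s + c ≡ s % q + c [MOD q] := Nat.ModEq.add_right c hmq.symm
        _ ≡ s % q + (b + (q - s % q)) [MOD q] := Nat.ModEq.add_left _ hcmod
        _ = b + (q - s % q) + s % q := by omega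
        _ = b + q := harith
        _ ≡ b [MOD q] := hbq
    rw [natMod1_congr h2, natMod1_eq_self hb]


/-- for integers `m ≥ 2` and `q ≥ 2`, the array `P` of Construction 1
(rows: vectors `f ∈ {1,…,q}^m` with `f_m = Mod(f_1+…+f_{m−1}, q)`; columns: pairs
`(δ,b)` with `δ ∈ {1,…,m}`, `b ∈ {1,…,q}`; entry `*` if `f_δ = b` and otherwise the
label `e` with `e_δ = b`, `e_i = f_i` for `i ≠ δ`) is an
`(mq, q^{m−1}, q^{m−2}, (q−1)q^{m−1})` PDA; moreover every row of `P` contains exactly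
`m` stars, and for every row `f` and every `δ` there is exactly one star among the `q`
entries in the columns `(δ,1),…,(δ,q)`. -/
theorem stmt_13 (m q : ℕ) (hm : 2 ≤ m) (hq : 2 ≤ q)
    -- rows of P
    (Row : (Fin m → ℕ) → Prop)
    (hRow : ∀ f, Row f ↔ ((∀ i, f i ∈ Finset.Icc 1 q) ∧
      f ⟨m - 1, by omega⟩
        = natMod1 (∑ i ∈ Finset.univ.filter (fun i : Fin m => (i : ℕ) < m - 1), f i) q))
    -- the (q−1)q^{m−1} integer labels of P
    (Lab : (Fin m → ℕ) → Prop)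
    (hLab : ∀ e, Lab e ↔ ((∀ i, e i ∈ Finset.Icc 1 q) ∧
      e ⟨m - 1, by omega⟩
        ≠ natMod1 (∑ i ∈ Finset.univ.filter (fun i : Fin m => (i : ℕ) < m - 1), e i) q))
    -- the array P itself (star = none)
    (P : (Fin m → ℕ) → Fin m → ℕ → Option (Fin m → ℕ))
    (hP : ∀ f (δ : Fin m) (b : ℕ),
      P f δ b = if f δ = b then none else some (Function.update f δ b)) :
    -- F = q^{m−1}: the number of rows
    Nat.card {f : Fin m → ℕ // Row f} = q ^ (m - 1) ∧
    -- C1: each column (δ,b) contains exactly Z = q^{m−2} stars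
    (∀ δ : Fin m, ∀ b ∈ Finset.Icc 1 q,
      Nat.card {f : Fin m → ℕ // Row f ∧ P f δ b = none} = q ^ (m - 2)) ∧
    -- S = (q−1)q^{m−1}: the number of labels
    Nat.card {e : Fin m → ℕ // Lab e} = (q - 1) * q ^ (m - 1) ∧
    -- non-star entries are labels
    (∀ f, Row f → ∀ δ : Fin m, ∀ b ∈ Finset.Icc 1 q, ∀ e,
      P f δ b = some e → Lab e) ∧
    -- C2: each label occurs at least once
    (∀ e, Lab e → ∃ f, Row f ∧ ∃ δ : Fin m, ∃ b ∈ Finset.Icc 1 q, P f δ b = some e) ∧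
    -- C3
    (∀ f1 f2, Row f1 → Row f2 → ∀ δ1 δ2 : Fin m,
      ∀ b1 ∈ Finset.Icc 1 q, ∀ b2 ∈ Finset.Icc 1 q,
      (f1, δ1, b1) ≠ (f2, δ2, b2) → P f1 δ1 b1 = P f2 δ2 b2 → P f1 δ1 b1 ≠ none →
      f1 ≠ f2 ∧ (δ1, b1) ≠ (δ2, b2) ∧ P f1 δ2 b2 = none ∧ P f2 δ1 b1 = none) ∧
    -- every row contains exactly m stars
    (∀ f, Row f →
      (((Finset.univ : Finset (Fin m)) ×ˢ Finset.Icc 1 q).filter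
        (fun p => P f p.1 p.2 = none)).card = m) ∧
    -- exactly one star among the columns (δ,1),…,(δ,q)
    (∀ f, Row f → ∀ δ : Fin m,
      ((Finset.Icc 1 q).filter (fun b => P f δ b = none)).card = 1) := by
    classical
  have hq1 : 1 ≤ q := by omega
  have hm1 : 1 ≤ m := by omega
  have hm0 : 0 < m := by omega
  set lastI : Fin m := ⟨m - 1, by omega⟩ with hlastI
  set j0 : Fin m := ⟨0, by omega⟩ with hj0
  set F : Finset (Fin m) := Finset.univ.filter (fun i : Fin m => (i : ℕ) < m - 1) with hF
  set A : Finset (Fin m → ℕ) := Fintype.piFinset fun _ : Fin m => Finset.Icc 1 q with hA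
  set G : (Fin m → ℕ) → ℕ := fun f => natMod1 (∑ i ∈ F, f i) q with hGdef
  -- basic index facts
  have hmemF : ∀ i : Fin m, i ∈ F ↔ i ≠ lastI := by
    intro i
    simp only [hF, Finset.mem_filter, Finset.mem_univ, true_and, Ne, Fin.ext_iff, hlastI]
    have := i.isLt
    omega
  have hlast_notF : lastI ∉ F := by
    rw [hmemF]; simp
  have hj0ne : j0 ≠ lastI := by
    simp only [hj0, hlastI, Ne, Fin.ext_iff]
    omega
  have hj0F : j0 ∈ F := (hmemF j0).2 hj0ne
  have hGupd : ∀ (f : Fin m → ℕ) (c : ℕ), G (Function.update f lastI c) = G f := by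
    intro f c
    simp only [hGdef]
    congr 1
    apply Finset.sum_congr rfl
    intro i hi
    exact Function.update_of_ne ((hmemF i).1 hi) _ _
  have hGmem : ∀ f : Fin m → ℕ, G f ∈ Finset.Icc 1 q := fun f => natMod1_mem _ _ hq1
  have hAmem : ∀ f : Fin m → ℕ, f ∈ A ↔ ∀ i, f i ∈ Finset.Icc 1 q := by
    intro f; exact Fintype.mem_piFinset
  have hRowA : ∀ f, Row f ↔ (f ∈ A ∧ f lastI = G f) := by
    intro f
    rw [hRow f]
    constructor
    · rintro ⟨h1, h2⟩; exact ⟨(hAmem f).mpr h1, h2⟩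
    · rintro ⟨h1, h2⟩; exact ⟨(hAmem f).mp h1, h2⟩
  have hLabA : ∀ e, Lab e ↔ (e ∈ A ∧ e lastI ≠ G e) := by
    intro e
    rw [hLab e]
    constructor
    · rintro ⟨h1, h2⟩; exact ⟨(hAmem e).mpr h1, h2⟩
    · rintro ⟨h1, h2⟩; exact ⟨(hAmem e).mp h1, h2⟩
  have hPnone : ∀ f (δ : Fin m) (b : ℕ), P f δ b = none ↔ f δ = b := by
    intro f δ b
    rw [hP]
    split
    · simpa
    · simpa
  have hcard : ∀ (p : (Fin m → ℕ) → Prop) (s : Finset (Fin m → ℕ)),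
      (∀ f, p f ↔ f ∈ s) → Nat.card {f : Fin m → ℕ // p f} = s.card := by
    intro p s h
    rw [Nat.card_congr (Equiv.subtypeEquivRight h), Nat.card_eq_fintype_card,
      Fintype.card_coe]
  -- row count
  have hArow : (A.filter (fun f => f lastI = G f)).card = q ^ (m - 1) := by
    have h1 : A.filter (fun f => f lastI = G f)
        = A.filter (fun f => f lastI = G f ∧ (fun _ : Fin m → ℕ => True) f) := by
      apply Finset.filter_congr; intro f _; simp
    rw [h1, hA, pin_card lastI G _ hq1 hGupd (by simp) hGmem]
    have h2 : (Fintype.piFinset fun _ : Fin m => Finset.Icc 1 q).filter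
          (fun f => f lastI = 1 ∧ (fun _ : Fin m → ℕ => True) f)
        = (Fintype.piFinset fun _ : Fin m => Finset.Icc 1 q).filter
          (fun f => ∀ i ∈ ({lastI} : Finset (Fin m)), f i = 1) := by
      apply Finset.filter_congr; intro f _; simp
    rw [h2, pins_card hq1, Finset.card_singleton]
  have part1 : Nat.card {f : Fin m → ℕ // Row f} = q ^ (m - 1) := by
    rw [hcard Row (A.filter (fun f => f lastI = G f))
      (fun f => by rw [hRowA f, Finset.mem_filter])]
    exact hArow
  -- column star count
  have hC1 : ∀ δ : Fin m, ∀ b ∈ Finset.Icc 1 q,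
      (A.filter (fun f => f lastI = G f ∧ f δ = b)).card = q ^ (m - 2) := by
    intro δ b hb
    rcases eq_or_ne δ lastI with rfl | hδ
    · -- δ = lastI
      set W : (Fin m → ℕ) → ℕ :=
        fun f => natMod1 (b + (q - (∑ i ∈ F.erase j0, f i) % q)) q with hWdef
      have hWupd : ∀ (f : Fin m → ℕ) (c : ℕ), W (Function.update f j0 c) = W f := by
        intro f c
        have hsum : (∑ i ∈ F.erase j0, Function.update f j0 c i)
            = ∑ i ∈ F.erase j0, f i :=
          Finset.sum_congr rfl
            (fun i hi => Function.update_of_ne (Finset.ne_of_mem_erase hi) _ _)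
        simp only [hWdef, hsum]
      have hWmem : ∀ f : Fin m → ℕ, W f ∈ Finset.Icc 1 q := fun f => natMod1_mem _ _ hq1
      have e1 : A.filter (fun f => f lastI = G f ∧ f lastI = b)
          = A.filter (fun f => f lastI = G f ∧ G f = b) := by
        apply Finset.filter_congr
        intro f _
        constructor
        · rintro ⟨h1, h2⟩; exact ⟨h1, by rw [← h1]; exact h2⟩
        · rintro ⟨h1, h2⟩; exact ⟨h1, by rw [h1]; exact h2⟩
      rw [e1, hA, pin_card lastI G (fun f => G f = b) hq1 hGupd
        (fun f c => by simp only [hGupd]) hGmem]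
      have e2 : (Fintype.piFinset fun _ : Fin m => Finset.Icc 1 q).filter
            (fun f => f lastI = 1 ∧ G f = b)
          = (Fintype.piFinset fun _ : Fin m => Finset.Icc 1 q).filter
            (fun f => f j0 = W f ∧ f lastI = 1) := by
        apply Finset.filter_congr
        intro f hf
        have hfj0 : f j0 ∈ Finset.Icc 1 q := Fintype.mem_piFinset.mp hf j0
        have hsum : ∑ i ∈ F, f i = (∑ i ∈ F.erase j0, f i) + f j0 :=
          (Finset.sum_erase_add F f hj0F).symm
        have hkey := key_mod (s := ∑ i ∈ F.erase j0, f i) hq1 hb hfj0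
        constructor
        · rintro ⟨h1, h2⟩
          refine ⟨?_, h1⟩
          simp only [hGdef] at h2
          rw [hsum] at h2
          exact hkey.mp h2
        · rintro ⟨h1, h2⟩
          refine ⟨h2, ?_⟩
          simp only [hGdef]
          rw [hsum]
          exact hkey.mpr h1
      rw [e2, pin_card j0 W (fun f => f lastI = 1) hq1 hWupd
        (fun f c => by simp only [Function.update_of_ne (Ne.symm hj0ne)]) hWmem]
      have e3 : (Fintype.piFinset fun _ : Fin m => Finset.Icc 1 q).filter
            (fun f => f j0 = 1 ∧ f lastI = 1)
          = (Fintype.piFinset fun _ : Fin m => Finset.Icc 1 q).filter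
            (fun f => ∀ i ∈ ({j0, lastI} : Finset (Fin m)), f i = 1) := by
        apply Finset.filter_congr
        intro f _
        simp only [Finset.mem_insert, Finset.mem_singleton]
        constructor
        · rintro ⟨h1, h2⟩ i (rfl | rfl) <;> assumption
        · intro h; exact ⟨h _ (Or.inl rfl), h _ (Or.inr rfl)⟩
      rw [e3, pins_card hq1]
      congr 1
      rw [Finset.card_insert_of_notMem (by simp [hj0ne]), Finset.card_singleton]
    · -- δ ≠ lastI
      rw [hA, pin_card lastI G (fun f => f δ = b) hq1 hGupd
        (fun f c => by simp only [Function.update_of_ne hδ]) hGmem]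
      have e2 : (Fintype.piFinset fun _ : Fin m => Finset.Icc 1 q).filter
            (fun f => f lastI = 1 ∧ f δ = b)
          = (Fintype.piFinset fun _ : Fin m => Finset.Icc 1 q).filter
            (fun f => f δ = b ∧ f lastI = 1) := by
        apply Finset.filter_congr
        intro f _
        exact and_comm
      rw [e2, pin_card δ (fun _ => b) (fun f => f lastI = 1) hq1 (fun f c => rfl)
        (fun f c => by simp only [Function.update_of_ne (Ne.symm hδ)]) (fun _ => hb)]
      have e3 : (Fintype.piFinset fun _ : Fin m => Finset.Icc 1 q).filter
            (fun f => f δ = 1 ∧ f lastI = 1)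
          = (Fintype.piFinset fun _ : Fin m => Finset.Icc 1 q).filter
            (fun f => ∀ i ∈ ({δ, lastI} : Finset (Fin m)), f i = 1) := by
        apply Finset.filter_congr
        intro f _
        simp only [Finset.mem_insert, Finset.mem_singleton]
        constructor
        · rintro ⟨h1, h2⟩ i (rfl | rfl) <;> assumption
        · intro h; exact ⟨h _ (Or.inl rfl), h _ (Or.inr rfl)⟩
      rw [e3, pins_card hq1]
      congr 1
      rw [Finset.card_insert_of_notMem (by simp [hδ]), Finset.card_singleton]
  have part2 : ∀ δ : Fin m, ∀ b ∈ Finset.Icc 1 q,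
      Nat.card {f : Fin m → ℕ // Row f ∧ P f δ b = none} = q ^ (m - 2) := by
    intro δ b hb
    rw [hcard (fun f => Row f ∧ P f δ b = none)
      (A.filter (fun f => f lastI = G f ∧ f δ = b))
      (fun f => by simp only [hRowA, hPnone, Finset.mem_filter, and_assoc])]
    exact hC1 δ b hb
  -- label count
  have part3 : Nat.card {e : Fin m → ℕ // Lab e} = (q - 1) * q ^ (m - 1) := by
    rw [hcard Lab (A.filter (fun f => ¬ f lastI = G f))
      (fun e => by rw [hLabA e, Finset.mem_filter])]
    have hsplit : (A.filter (fun f => f lastI = G f)).card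
        + (A.filter (fun f => ¬ f lastI = G f)).card = A.card :=
      Finset.card_filter_add_card_filter_not _
    have hAcard : A.card = q ^ m := by
      rw [hA, Fintype.card_piFinset]
      simp [Nat.card_Icc]
    have h1 : (A.filter (fun f => ¬ f lastI = G f)).card = q ^ m - q ^ (m - 1) := by
      rw [← hAcard, ← hArow]
      exact (Nat.eq_sub_of_add_eq' hsplit)
    rw [h1, pow_sub_aux q m hm1]
  -- non-star entries are labels
  have part4 : ∀ f, Row f → ∀ δ : Fin m, ∀ b ∈ Finset.Icc 1 q, ∀ e,
      P f δ b = some e → Lab e := by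
    intro f hRowf δ b hb e hPe
    rw [hP] at hPe
    rw [hRowA] at hRowf
    obtain ⟨hfA, hflast⟩ := hRowf
    by_cases hfd : f δ = b
    · rw [if_pos hfd] at hPe; simp at hPe
    · rw [if_neg hfd] at hPe
      obtain rfl : e = Function.update f δ b := (Option.some.inj hPe).symm
      rw [hLabA]
      have hupdA : Function.update f δ b ∈ A := by
        rw [hAmem]; intro i
        rcases eq_or_ne i δ with rfl | hne
        · simpa using hb
        · rw [Function.update_of_ne hne]; exact (hAmem f).mp hfA i
      refine ⟨hupdA, ?_⟩
      rcases eq_or_ne δ lastI with rfl | hdl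
      · rw [Function.update_self, hGupd]
        intro hcontr
        exact hfd (hflast.trans hcontr.symm)
      · rw [Function.update_of_ne (Ne.symm hdl)]
        intro hcontr
        have hδF : δ ∈ F := (hmemF δ).2 hdl
        have hs1 : ∑ i ∈ F, Function.update f δ b i = (∑ i ∈ F.erase δ, f i) + b := by
          rw [← Finset.sum_erase_add F _ hδF]
          congr 1
          · apply Finset.sum_congr rfl
            intro i hi
            exact Function.update_of_ne (Finset.ne_of_mem_erase hi) _ _
          · exact Function.update_self δ b f
        have hs2 : ∑ i ∈ F, f i = (∑ i ∈ F.erase δ, f i) + f δ :=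
          (Finset.sum_erase_add F f hδF).symm
        have hGG := hflast.symm.trans hcontr
        simp only [hGdef] at hGG
        rw [hs1, hs2] at hGG
        have hmod : ((∑ i ∈ F.erase δ, f i) + f δ) % q
            = ((∑ i ∈ F.erase δ, f i) + b) % q := by
          rw [← natMod1_mod _ q, hGG, natMod1_mod]
        exact hfd (icc_inj ((hAmem f).mp hfA δ) hb (Nat.ModEq.add_left_cancel' _ hmod))
  -- C2
  have part5 : ∀ e, Lab e → ∃ f, Row f ∧ ∃ δ : Fin m, ∃ b ∈ Finset.Icc 1 q,
      P f δ b = some e := by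
    intro e hLabe
    rw [hLabA] at hLabe
    obtain ⟨heA, hene⟩ := hLabe
    refine ⟨Function.update e lastI (G e), ?_, lastI, e lastI, (hAmem e).mp heA lastI, ?_⟩
    · rw [hRowA]
      constructor
      · rw [hAmem]; intro i
        rcases eq_or_ne i lastI with rfl | hne
        · simp only [Function.update_self]; exact hGmem e
        · rw [Function.update_of_ne hne]; exact (hAmem e).mp heA i
      · rw [Function.update_self, hGupd]
    · have hne2 : Function.update e lastI (G e) lastI ≠ e lastI := by
        rw [Function.update_self]; exact fun h => hene h.symm
      rw [hP, if_neg hne2, Function.update_idem, Function.update_eq_self]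
  -- C3
  have part6 : ∀ f1 f2, Row f1 → Row f2 → ∀ δ1 δ2 : Fin m,
      ∀ b1 ∈ Finset.Icc 1 q, ∀ b2 ∈ Finset.Icc 1 q,
      (f1, δ1, b1) ≠ (f2, δ2, b2) → P f1 δ1 b1 = P f2 δ2 b2 → P f1 δ1 b1 ≠ none →
      f1 ≠ f2 ∧ (δ1, b1) ≠ (δ2, b2) ∧ P f1 δ2 b2 = none ∧ P f2 δ1 b1 = none := by
    intro f1 f2 hR1 hR2 δ1 δ2 b1 hb1 b2 hb2 hne heq hnn
    rw [hRowA] at hR1 hR2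
    have h1 : f1 δ1 ≠ b1 := by
      intro h; exact hnn ((hPnone f1 δ1 b1).mpr h)
    rw [hP, hP, if_neg h1] at heq
    have h2 : f2 δ2 ≠ b2 := by
      intro h; rw [if_pos h] at heq; simp at heq
    rw [if_neg h2] at heq
    have hupd : Function.update f1 δ1 b1 = Function.update f2 δ2 b2 :=
      Option.some.inj heq
    have hδ : δ1 ≠ δ2 := by
      rintro rfl
      have hbb : b1 = b2 := by
        have := congrFun hupd δ1
        simpa using this
      have hoff : ∀ i, i ≠ δ1 → f1 i = f2 i := by
        intro i hi
        have := congrFun hupd i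
        rwa [Function.update_of_ne hi, Function.update_of_ne hi] at this
      have hff : f1 = f2 := by
        funext i
        rcases eq_or_ne i δ1 with rfl | hi
        · rcases eq_or_ne i lastI with rfl | hil
          · have hsum : (∑ j ∈ F, f1 j) = ∑ j ∈ F, f2 j :=
              Finset.sum_congr rfl (fun j hj => hoff j (fun h => hlast_notF (h ▸ hj)))
            rw [hR1.2, hR2.2]
            simp only [hGdef]
            rw [hsum]
          · have hiF : i ∈ F := (hmemF i).2 hil
            have hs1 : ∑ j ∈ F, f1 j = (∑ j ∈ F.erase i, f1 j) + f1 i :=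
              (Finset.sum_erase_add F f1 hiF).symm
            have hs2 : ∑ j ∈ F, f2 j = (∑ j ∈ F.erase i, f2 j) + f2 i :=
              (Finset.sum_erase_add F f2 hiF).symm
            have hse : ∑ j ∈ F.erase i, f1 j = ∑ j ∈ F.erase i, f2 j :=
              Finset.sum_congr rfl (fun j hj => hoff j (Finset.ne_of_mem_erase hj))
            have hl12 : f1 lastI = f2 lastI := hoff lastI (Ne.symm hil)
            have hGG : natMod1 (∑ j ∈ F, f1 j) q = natMod1 (∑ j ∈ F, f2 j) q := by
              have := hR1.2.symm.trans (hl12.trans hR2.2)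
              simpa [hGdef] using this
            rw [hs1, hs2, ← hse] at hGG
            have hmod : ((∑ j ∈ F.erase i, f1 j) + f1 i) % q
                = ((∑ j ∈ F.erase i, f1 j) + f2 i) % q := by
              rw [← natMod1_mod _ q, hGG, natMod1_mod]
            exact icc_inj ((hAmem f1).mp hR1.1 i) ((hAmem f2).mp hR2.1 i)
              (Nat.ModEq.add_left_cancel' _ hmod)
        · exact hoff i hi
      exact hne (by rw [hff, hbb])
    have e1 : f2 δ1 = b1 := by
      have := congrFun hupd δ1
      rw [Function.update_self, Function.update_of_ne hδ] at this
      exact this.symm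
    have e2 : f1 δ2 = b2 := by
      have := congrFun hupd δ2
      rw [Function.update_self, Function.update_of_ne (Ne.symm hδ)] at this
      exact this
    refine ⟨?_, ?_, ?_, ?_⟩
    · intro h; exact h1 (by rw [h, e1])
    · intro h; exact hδ (congrArg Prod.fst h)
    · exact (hPnone f1 δ2 b2).mpr e2
    · exact (hPnone f2 δ1 b1).mpr e1
  -- row star count
  have part7 : ∀ f, Row f →
      (((Finset.univ : Finset (Fin m)) ×ˢ Finset.Icc 1 q).filter
        (fun p => P f p.1 p.2 = none)).card = m := by
    intro f hRf
    rw [hRowA] at hRf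
    have hfI : ∀ i, f i ∈ Finset.Icc 1 q := (hAmem f).mp hRf.1
    have key : ((((Finset.univ : Finset (Fin m)) ×ˢ Finset.Icc 1 q).filter
          (fun p => P f p.1 p.2 = none))).card
        = (Finset.univ : Finset (Fin m)).card := by
      apply Finset.card_nbij' (fun p => p.1) (fun δ => (δ, f δ))
      · intro p _; exact Finset.mem_univ _
      · intro δ _
        rw [Finset.mem_coe, Finset.mem_filter]
        exact ⟨Finset.mem_product.mpr ⟨Finset.mem_univ _, hfI δ⟩,
          (hPnone f δ (f δ)).mpr rfl⟩
      · intro p hp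
        rw [Finset.mem_coe, Finset.mem_filter] at hp
        have h2 := (hPnone f p.1 p.2).mp hp.2
        exact Prod.ext rfl h2
      · intro δ _; rfl
    rw [key, Finset.card_univ, Fintype.card_fin]
  -- one star per group
  have part8 : ∀ f, Row f → ∀ δ : Fin m,
      ((Finset.Icc 1 q).filter (fun b => P f δ b = none)).card = 1 := by
    intro f hRf δ
    rw [hRowA] at hRf
    have hfI : ∀ i, f i ∈ Finset.Icc 1 q := (hAmem f).mp hRf.1
    have hset : (Finset.Icc 1 q).filter (fun b => P f δ b = none) = {f δ} := by
      ext b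
      rw [Finset.mem_filter, Finset.mem_singleton, hPnone]
      constructor
      · rintro ⟨_, h⟩; exact h.symm
      · rintro rfl; exact ⟨hfI δ, rfl⟩
    rw [hset, Finset.card_singleton]
  exact ⟨part1, part2, part3, part4, part5, part6, part7, part8⟩
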